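/- Let z : ℤ → k be a sequence with z(n) ≠ 0 for all n and z(n) + z(n+1)^{−1} = [2]_q for all n ∈ ℤ. Then there exist x, y ∈ k, not both zero, such that for every n ∈ ℤ one has x·q^n − y·q^{−n} ≠ 0 and z(n) = (x·q^{n−1} − y·q^{−(n−1)})/(x·q^n − y·q^{−n}). (The nonvanishing of x·q^n − y·q^{−n} for all n expresses that the point [x : y] of the projective line ℙ¹(k) does not lie in the set q^{2ℤ}.) -/

import Mathlib

/-- The "quantum elementary fact": if `z : ℤ → k` is a sequence of nonzero
elements satisfying `z n + (z (n+1))⁻¹ = [2]_q = q + q⁻¹`, then there is a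
point `[x : y]` of `ℙ¹(k)` avoiding `q^{2ℤ}` (i.e. `x*q^n - y*q^{-n} ≠ 0`
for all `n`) with `z n = [n - 1 ; x:y]_q / [n ; x:y]_q`. -/
theorem quantum_elementary_fact {k : Type*} [Field k]
    (q : k) (hq : q ≠ 0) (hroot : ∀ m : ℤ, m ≠ 0 → q ^ m ≠ 1)
    (z : ℤ → k) (hz : ∀ n : ℤ, z n ≠ 0)
    (hrec : ∀ n : ℤ, z n + (z (n + 1))⁻¹ = q + q⁻¹) :
    ∃ x y : k, ¬(x = 0 ∧ y = 0) ∧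
      ∀ n : ℤ, x * q ^ n - y * q ^ (-n) ≠ 0 ∧
        z n = (x * q ^ (n - 1) - y * q ^ (-(n - 1))) / (x * q ^ n - y * q ^ (-n)) := by
  have hq2 : q - q⁻¹ ≠ 0 := by
    intro h
    apply hroot 2 two_ne_zero
    have hq' : q = q⁻¹ := by rwa [sub_eq_zero] at h
    have hqq : q * q = 1 := by
      nth_rewrite 2 [hq']
      exact mul_inv_cancel₀ hq
    calc q ^ (2:ℤ) = q * q := by rw [zpow_two]
    _ = 1 := hqq
  set x : k := ((z 1)⁻¹ - q⁻¹) / (q - q⁻¹) with hx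
  set y : k := x - 1 with hy
  set f : ℤ → k := fun m => x * q ^ m - y * q ^ (-m) with hf
  have hf0 : f 0 = 1 := by simp [hf, hy]
  have hf1 : f 1 = (z 1)⁻¹ := by
    show x * q ^ (1:ℤ) - y * q ^ (-1:ℤ) = (z 1)⁻¹
    have hxq : x * (q - q⁻¹) = (z 1)⁻¹ - q⁻¹ := by
      rw [hx, div_mul_cancel₀ _ hq2]
    rw [hy, zpow_one, zpow_neg_one]
    linear_combination hxq
  have hstep : ∀ m : ℤ, f (m + 1) = (q + q⁻¹) * f m - f (m - 1) := by
    intro m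
    have h1 : q ^ (m+1) = q ^ m * q := zpow_add_one₀ hq m
    have h2 : q ^ (m-1) = q ^ m * q⁻¹ := by rw [zpow_sub_one₀ hq]
    have h3 : q ^ (-(m+1)) = q ^ (-m) * q⁻¹ := by
      rw [show -(m+1) = -m - 1 by ring, zpow_sub_one₀ hq]
    have h4 : q ^ (-(m-1)) = q ^ (-m) * q := by
      rw [show -(m-1) = -m + 1 by ring, zpow_add_one₀ hq]
    simp only [hf, h1, h2, h3, h4]
    ring
  have key : ∀ n : ℤ, f n ≠ 0 ∧ z n * f n = f (n - 1) := by
    intro n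
    induction n using Int.induction_on with
    | zero =>
      refine ⟨by rw [hf0]; exact one_ne_zero, ?_⟩
      have h := hstep 0
      rw [zero_add, hf1, hf0] at h
      have h0 := hrec 0
      rw [zero_add] at h0
      rw [hf0, mul_one]
      linear_combination h0 - h
    | succ n ih =>
      obtain ⟨hfn, hzn⟩ := ih
      have hinv : (z ((n:ℤ)+1))⁻¹ = (q + q⁻¹) - z n := by
        linear_combination hrec n
      have hfe : f ((n:ℤ) + 1) = (z ((n:ℤ)+1))⁻¹ * f n := by
        rw [hinv, hstep n, ← hzn]; ring
      have hne : f ((n:ℤ)+1) ≠ 0 := by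
        rw [hfe]; exact mul_ne_zero (inv_ne_zero (hz _)) hfn
      refine ⟨hne, ?_⟩
      rw [show (n:ℤ) + 1 - 1 = n by ring, hfe, ← mul_assoc,
        mul_inv_cancel₀ (hz _), one_mul]
    | pred n ih =>
      obtain ⟨hfn, hzn⟩ := ih
      have hne : f (-(n:ℤ) - 1) ≠ 0 := by
        rw [← hzn]; exact mul_ne_zero (hz _) hfn
      refine ⟨hne, ?_⟩
      have hs := hstep (-(n:ℤ) - 1)
      rw [show (-(n:ℤ) - 1 + 1) = -n by ring] at hs
      have hr := hrec (-(n:ℤ) - 1)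
      rw [show (-(n:ℤ) - 1 + 1) = -n by ring] at hr
      have hinv : (z (-(n:ℤ)))⁻¹ * f (-(n:ℤ) - 1) = f (-(n:ℤ)) := by
        rw [← hzn, ← mul_assoc, inv_mul_cancel₀ (hz _), one_mul]
      linear_combination f (-(n:ℤ)-1) * hr - hs - hinv
  refine ⟨x, y, ?_, fun n => ⟨(key n).1, ?_⟩⟩
  · rintro ⟨hx0, hy0⟩
    rw [hy, hx0] at hy0
    simp at hy0
  · rw [eq_div_iff (key n).1]
    exact (key n).2
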